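/- Let n ≥ 2 be an integer and let R_∞ = ℤ[x_1, x_2, x_3, ...] be the ring of polynomials with integer coefficients in countably many commuting indeterminates. Then there is no integer v ≥ 1 such that every element f of the subring J(2^n, R_∞) of R_∞ generated by all 2^n-th powers can be written in the form f = Σ_{i=1}^v ε_i f_i^{2^n} for some f_1, ..., f_v ∈ R_∞ and signs ε_i ∈ {+1, −1}. Equivalently, v(2^n, R_∞) = ∞. -/

import Mathlib

namespace Stmt0Aux
noncomputable section
open MvPolynomial Finsupp

variable {R S : Type*} [CommRing R] [CommRing S]

/-- expand of a monomial, smul form. -/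
lemma expand_monomial_smul (p : ℕ) (d : ℕ →₀ ℕ) (r : R) :
    expand p (monomial d r) = monomial (p • d) r := by
  rw [expand_monomial, monomial_eq]

lemma coeff_expand_smul {p : ℕ} (hp : 0 < p) (d : ℕ →₀ ℕ) (f : MvPolynomial ℕ R) :
    coeff (p • d) (expand p f) = coeff d f := by
  induction f using MvPolynomial.induction_on' with
  | monomial u a =>
    rw [expand_monomial_smul, coeff_monomial, coeff_monomial]
    congr 1
    simp only [eq_iff_iff]
    constructor
    · intro h
      ext x
      have := DFunLike.congr_fun h x
      simp only [Finsupp.smul_apply, smul_eq_mul] at this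
      exact Nat.eq_of_mul_eq_mul_left hp this
    · rintro rfl; rfl
  | add f g hf hg => rw [map_add, coeff_add, coeff_add, hf, hg]

lemma expand_inj {p : ℕ} (hp : 0 < p) {f g : MvPolynomial ℕ R}
    (h : expand p f = expand p g) : f = g := by
  ext d
  rw [← coeff_expand_smul hp d f, ← coeff_expand_smul hp d g, h]

lemma expand_expand (a b : ℕ) (f : MvPolynomial ℕ R) :
    expand a (expand b f) = expand (a * b) f := by
  induction f using MvPolynomial.induction_on' with
  | monomial u c => rw [expand_monomial_smul, expand_monomial_smul, expand_monomial_smul, smul_smul]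
  | add f g hf hg => rw [map_add, map_add, map_add, hf, hg]

/-- Frobenius: over `ZMod 2`, squaring is `expand 2`. -/
lemma sq_eq_expand (f : MvPolynomial ℕ (ZMod 2)) : f ^ 2 = expand 2 f := by
  induction f using MvPolynomial.induction_on' with
  | monomial u c =>
    rw [monomial_pow, expand_monomial_smul]
    congr 1
    revert c; decide
  | add f g hf hg =>
    have : (f + g) ^ 2 = f ^ 2 + g ^ 2 := by
      have h2 : (2 : MvPolynomial ℕ (ZMod 2)) = 0 := by
        have : ((2 : ℕ) : MvPolynomial ℕ (ZMod 2)) = 0 := CharP.cast_eq_zero _ 2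
        exact_mod_cast this
      ring_nf
      rw [show f * g * 2 = (2 : MvPolynomial ℕ (ZMod 2)) * (f * g) by ring, h2]
      ring
    rw [this, map_add, hf, hg]

lemma pow_two_pow_eq_expand (r : ℕ) (f : MvPolynomial ℕ (ZMod 2)) :
    f ^ (2 ^ r) = expand (2 ^ r) f := by
  induction r with
  | zero => simp [expand_one_apply]
  | succ r ih =>
    rw [pow_succ, pow_mul, ih, sq_eq_expand, expand_expand, mul_comm]

/-- Apply a function to all coefficients of a polynomial. -/
def coeffMap (h : R → S) (P : MvPolynomial ℕ R) : MvPolynomial ℕ S :=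
  ∑ d ∈ P.support, monomial d (h (P.coeff d))

lemma coeff_coeffMap {h : R → S} (h0 : h 0 = 0) (P : MvPolynomial ℕ R) (d : ℕ →₀ ℕ) :
    coeff d (coeffMap h P) = h (coeff d P) := by
  rw [coeffMap, coeff_sum]
  rw [Finset.sum_congr rfl (fun x _ => coeff_monomial d x (h (P.coeff x)))]
  rw [Finset.sum_ite_eq' P.support d (fun x => h (P.coeff x))]
  split
  · rfl
  · next hd => rw [MvPolynomial.notMem_support_iff.mp hd, h0]

/-- Binary lift from `ZMod 2` coefficients to `ZMod 8` coefficients. -/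
def blift (s : MvPolynomial ℕ (ZMod 2)) : MvPolynomial ℕ (ZMod 8) :=
  coeffMap (fun x => if x = 1 then 1 else 0) s

lemma blift_binary (s : MvPolynomial ℕ (ZMod 2)) (d : ℕ →₀ ℕ) :
    coeff d (blift s) = 0 ∨ coeff d (blift s) = 1 := by
  rw [blift, coeff_coeffMap (by decide)]
  split <;> simp

lemma map_blift (s : MvPolynomial ℕ (ZMod 2)) :
    map (ZMod.castHom (by norm_num : (2:ℕ) ∣ 8) (ZMod 2)) (blift s) = s := by
  ext d
  rw [coeff_map, blift, coeff_coeffMap (by decide)]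
  revert s
  intro s
  generalize coeff d s = x
  revert x; decide

lemma exists_double8 (W : MvPolynomial ℕ (ZMod 8))
    (h : map (ZMod.castHom (by norm_num : (2:ℕ) ∣ 8) (ZMod 2)) W = 0) :
    ∃ c, W = 2 * c := by
  refine ⟨coeffMap (fun x => if x = 2 then 1 else if x = 4 then 2 else if x = 6 then 3 else 0) W, ?_⟩
  ext d
  have hd : ZMod.castHom (by norm_num : (2:ℕ) ∣ 8) (ZMod 2) (coeff d W) = 0 := by
    have := congrArg (coeff d) h
    rwa [coeff_map, coeff_zero] at this
  rw [show (2 : MvPolynomial ℕ (ZMod 8)) = C (2 : ZMod 8) from (map_ofNat C 2).symm]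
  rw [coeff_C_mul, coeff_coeffMap (by decide)]
  revert hd
  generalize coeff d W = x
  revert x; decide

lemma exists_double4 (W : MvPolynomial ℕ (ZMod 4))
    (h : map (ZMod.castHom (by norm_num : (2:ℕ) ∣ 4) (ZMod 2)) W = 0) :
    ∃ c, W = 2 * c := by
  refine ⟨coeffMap (fun x => if x = 2 then 1 else 0) W, ?_⟩
  ext d
  have hd : ZMod.castHom (by norm_num : (2:ℕ) ∣ 4) (ZMod 2) (coeff d W) = 0 := by
    have := congrArg (coeff d) h
    rwa [coeff_map, coeff_zero] at this
  rw [show (2 : MvPolynomial ℕ (ZMod 4)) = C (2 : ZMod 4) from (map_ofNat C 2).symm]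
  rw [coeff_C_mul, coeff_coeffMap (by decide)]
  revert hd
  generalize coeff d W = x
  revert x; decide

lemma pow4_eq_of_map_eq {p q : MvPolynomial ℕ (ZMod 8)}
    (h : map (ZMod.castHom (by norm_num : (2:ℕ) ∣ 8) (ZMod 2)) p
       = map (ZMod.castHom (by norm_num : (2:ℕ) ∣ 8) (ZMod 2)) q) :
    p ^ 4 = q ^ 4 := by
  obtain ⟨c, hc⟩ := exists_double8 (q - p) (by rw [map_sub, h, sub_self])
  have hq : q = p + 2 * c := by linear_combination hc
  have h8 : (8 : MvPolynomial ℕ (ZMod 8)) = 0 := by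
    rw [show (8 : MvPolynomial ℕ (ZMod 8)) = C (8 : ZMod 8) from (map_ofNat C 8).symm]
    rw [show (8 : ZMod 8) = 0 from rfl, map_zero]
  have key : (p + 2*c) ^ 4 = p ^ 4 + 8 * (p^3*c + 3*p^2*c^2 + 4*p*c^3 + 2*c^4) := by ring
  rw [hq, key, h8, zero_mul, add_zero]

lemma pow4_eq_expand_sq (L : MvPolynomial ℕ (ZMod 4)) : L ^ 4 = expand 2 (L ^ 2) := by
  obtain ⟨Q, hQ⟩ := exists_double4 (L ^ 2 - expand 2 L) (by
    rw [map_sub, map_pow, map_expand, sq_eq_expand, sub_self])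
  have h4 : (4 : MvPolynomial ℕ (ZMod 4)) = 0 := by
    rw [show (4 : MvPolynomial ℕ (ZMod 4)) = C (4 : ZMod 4) from (map_ofNat C 4).symm]
    rw [show (4 : ZMod 4) = 0 from rfl, map_zero]
  have hL2 : L ^ 2 = expand 2 L + 2 * Q := by linear_combination hQ
  have key : (expand 2 L + 2*Q) ^ 2
      = (expand 2 L) ^ 2 + 4 * ((expand 2 L) * Q + Q ^ 2) := by ring
  calc L ^ 4 = (L ^ 2) ^ 2 := by ring
    _ = (expand 2 L + 2*Q) ^ 2 := by rw [hL2]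
    _ = (expand 2 L) ^ 2 := by rw [key, h4, zero_mul, add_zero]
    _ = expand 2 (L ^ 2) := (map_pow _ _ _).symm

lemma finsupp_sub_eq_zero_iff {u w : ℕ →₀ ℕ} : u - w = 0 ↔ ∀ x, u x ≤ w x := by
  rw [tsub_eq_zero_iff_le, Finsupp.le_def]

lemma cc_pderiv (a : ℕ) (P : MvPolynomial ℕ R) :
    constantCoeff (pderiv a P) = coeff (Finsupp.single a 1) P := by
  induction P using MvPolynomial.induction_on' with
  | monomial u c =>
    rw [pderiv_monomial, constantCoeff_monomial, coeff_monomial]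
    by_cases h : u = Finsupp.single a 1
    · subst h
      rw [if_pos (tsub_self _), if_pos rfl, Finsupp.single_eq_same]
      simp
    · rw [if_neg h]
      by_cases h0 : u - Finsupp.single a 1 = 0
      · rw [if_pos h0]
        have hle := finsupp_sub_eq_zero_iff.mp h0
        have hua : u a = 0 := by
          by_contra hua
          apply h
          ext x
          by_cases hx : x = a
          · subst hx
            have := hle x
            rw [Finsupp.single_eq_same] at this ⊢
            omega
          · have := hle x
            rw [Finsupp.single_eq_of_ne hx] at this ⊢
            omega
        rw [hua]
        simp
      · rw [if_neg h0]
  | add p q hp hq => rw [map_add, map_add, coeff_add, hp, hq]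

lemma cc_pderiv_pderiv {a b : ℕ} (hab : a ≠ b) (P : MvPolynomial ℕ R) :
    constantCoeff (pderiv b (pderiv a P))
      = coeff (Finsupp.single a 1 + Finsupp.single b 1) P := by
  induction P using MvPolynomial.induction_on' with
  | monomial u c =>
    rw [pderiv_monomial, pderiv_monomial, constantCoeff_monomial, coeff_monomial]
    have hsub : (u - Finsupp.single a 1 : ℕ →₀ ℕ) b = u b := by
      rw [Finsupp.tsub_apply, Finsupp.single_eq_of_ne (Ne.symm hab), Nat.sub_zero]
    rw [hsub]
    by_cases h : u = Finsupp.single a 1 + Finsupp.single b 1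
    · subst h
      have h1 : (Finsupp.single a 1 + Finsupp.single b 1 : ℕ →₀ ℕ) - Finsupp.single a 1 - Finsupp.single b 1 = 0 := by
        rw [tsub_tsub, tsub_self]
      rw [if_pos h1, if_pos rfl]
      rw [Finsupp.add_apply, Finsupp.add_apply, Finsupp.single_eq_same, Finsupp.single_eq_same,
        Finsupp.single_eq_of_ne hab, Finsupp.single_eq_of_ne (Ne.symm hab)]
      simp
    · rw [if_neg h]
      by_cases h0 : u - Finsupp.single a 1 - Finsupp.single b 1 = 0
      · rw [if_pos h0]
        rw [tsub_tsub] at h0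
        have hle := finsupp_sub_eq_zero_iff.mp h0
        have key : u a = 0 ∨ u b = 0 := by
          by_contra hk
          push_neg at hk
          apply h
          ext x
          have := hle x
          rw [Finsupp.add_apply] at this ⊢
          by_cases hx : x = a
          · subst hx
            rw [Finsupp.single_eq_same, Finsupp.single_eq_of_ne hab] at this ⊢
            omega
          · by_cases hx' : x = b
            · subst hx'
              rw [Finsupp.single_eq_same, Finsupp.single_eq_of_ne (Ne.symm hab)] at this ⊢
              omega
            · rw [Finsupp.single_eq_of_ne hx, Finsupp.single_eq_of_ne hx'] at this ⊢
              omega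
        rcases key with hk | hk <;> rw [hk] <;> simp
      · rw [if_neg h0]
  | add p q hp hq => rw [map_add, map_add, map_add, coeff_add, hp, hq]

lemma exists_cc_pderiv2 (a : ℕ) (P : MvPolynomial ℕ R) :
    ∃ w : R, constantCoeff (pderiv a (pderiv a P)) = 2 * w := by
  induction P using MvPolynomial.induction_on' with
  | monomial u c =>
    rw [pderiv_monomial, pderiv_monomial, constantCoeff_monomial]
    by_cases h0 : u - Finsupp.single a 1 - Finsupp.single a 1 = 0
    · rw [if_pos h0]
      have hsub : (u - Finsupp.single a 1 : ℕ →₀ ℕ) a = u a - 1 := by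
        rw [Finsupp.tsub_apply, Finsupp.single_eq_same]
      rw [hsub]
      have heven : Even (u a * (u a - 1)) := by
        rcases Nat.even_or_odd (u a) with he | ho
        · exact he.mul_right _
        · exact (Nat.Odd.sub_odd ho odd_one).mul_left _
      obtain ⟨k, hk⟩ := heven
      refine ⟨c * k, ?_⟩
      have : (c * (u a : R) * ((u a - 1 : ℕ) : R)) = c * ((u a * (u a - 1) : ℕ) : R) := by
        push_cast; ring
      rw [this, hk]
      push_cast; ring
    · exact ⟨0, by rw [if_neg h0, mul_zero]⟩
  | add p q hp hq =>
    obtain ⟨w1, h1⟩ := hp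
    obtain ⟨w2, h2⟩ := hq
    refine ⟨w1 + w2, ?_⟩
    rw [map_add, map_add, map_add, h1, h2]
    ring

def ρ82 : ZMod 8 →+* ZMod 2 := ZMod.castHom (show (2:ℕ) ∣ 8 by norm_num) (ZMod 2)
def ρ84 : ZMod 8 →+* ZMod 4 := ZMod.castHom (show (4:ℕ) ∣ 8 by norm_num) (ZMod 4)
def ρ42 : ZMod 4 →+* ZMod 2 := ZMod.castHom (show (2:ℕ) ∣ 4 by norm_num) (ZMod 2)

lemma zmod8_four {x : ZMod 8} (h : 4 * x = 0) : ρ82 x = 0 := by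
  obtain ⟨k, rfl⟩ : ∃ k : ℕ, (k : ZMod 8) = x := ⟨x.val, ZMod.natCast_rightInverse x⟩
  have h8 : (8:ℕ) ∣ 4 * k := by
    have : ((4 * k : ℕ) : ZMod 8) = 0 := by push_cast; rw [h]
    exact (ZMod.natCast_eq_zero_iff _ _).mp this
  have h2 : (2:ℕ) ∣ k := by omega
  rw [map_natCast]
  exact (ZMod.natCast_eq_zero_iff _ _).mpr h2

lemma zmod4_two {x : ZMod 4} (h : 2 * x = 0) : ρ42 x = 0 := by
  obtain ⟨k, rfl⟩ : ∃ k : ℕ, (k : ZMod 4) = x := ⟨x.val, ZMod.natCast_rightInverse x⟩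
  have h4 : (4:ℕ) ∣ 2 * k := by
    have : ((2 * k : ℕ) : ZMod 4) = 0 := by push_cast; rw [h]
    exact (ZMod.natCast_eq_zero_iff _ _).mp this
  have h2 : (2:ℕ) ∣ k := by omega
  rw [map_natCast]
  exact (ZMod.natCast_eq_zero_iff _ _).mpr h2

lemma ρ_comp (x : ZMod 8) : ρ42 (ρ84 x) = ρ82 x := by
  obtain ⟨k, rfl⟩ : ∃ k : ℕ, (k : ZMod 8) = x := ⟨x.val, ZMod.natCast_rightInverse x⟩
  rw [map_natCast, map_natCast, map_natCast]

/-- constant coefficient of `∂ₐ(P⁴)` over `ZMod 8`. -/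
lemma cc_pderiv_pow4 (a : ℕ) (P : MvPolynomial ℕ (ZMod 8)) :
    constantCoeff (pderiv a (P ^ 4))
      = 4 * (constantCoeff P)^3 * coeff (Finsupp.single a 1) P := by
  have h : P ^ 4 = P*P*P*P := by ring
  rw [h]
  simp only [pderiv_mul, map_add, map_mul, cc_pderiv]
  ring

lemma cc_pdpd_pow4 {a b : ℕ} (hab : a ≠ b) (P : MvPolynomial ℕ (ZMod 8)) :
    constantCoeff (pderiv b (pderiv a (P ^ 4)))
      = 12 * (constantCoeff P)^2 * (coeff (Finsupp.single a 1) P * coeff (Finsupp.single b 1) P)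
        + 4 * (constantCoeff P)^3 * coeff (Finsupp.single a 1 + Finsupp.single b 1) P := by
  have h : P ^ 4 = P*P*P*P := by ring
  rw [h]
  simp only [pderiv_mul, map_add, map_mul, cc_pderiv, cc_pderiv_pderiv hab]
  ring

lemma cc_pdpd_sq {a b : ℕ} (hab : a ≠ b) (P : MvPolynomial ℕ (ZMod 4)) :
    constantCoeff (pderiv b (pderiv a (P ^ 2)))
      = 2 * (coeff (Finsupp.single a 1) P * coeff (Finsupp.single b 1) P)
        + 2 * (constantCoeff P * coeff (Finsupp.single a 1 + Finsupp.single b 1) P) := by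
  have h : P ^ 2 = P*P := by ring
  rw [h]
  simp only [pderiv_mul, map_add, map_mul, cc_pderiv, cc_pderiv_pderiv hab]
  ring

lemma cc_pd2_sq (a : ℕ) (P : MvPolynomial ℕ (ZMod 4)) :
    constantCoeff (pderiv a (pderiv a (P ^ 2)))
      = 2 * (coeff (Finsupp.single a 1) P)^2
        + 2 * (constantCoeff P * constantCoeff (pderiv a (pderiv a P))) := by
  have h : P ^ 2 = P*P := by ring
  rw [h]
  simp only [pderiv_mul, map_add, map_mul, cc_pderiv]
  ring

lemma coeff_single_X {j a : ℕ} :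
    coeff (Finsupp.single a 1) (X j : MvPolynomial ℕ (ZMod 4)) = if j = a then 1 else 0 := by
  rw [show (X j : MvPolynomial ℕ (ZMod 4)) = monomial (Finsupp.single j 1) 1 from rfl,
    coeff_monomial]
  congr 1
  simp only [eq_iff_iff]
  exact ⟨fun h => Finsupp.single_left_injective one_ne_zero h,
    fun h => by rw [h]⟩

lemma core {v m : ℕ} (K : Fin v → MvPolynomial ℕ (ZMod 8)) (η : Fin v → ℤ)
    (hη : ∀ i, η i = 1 ∨ η i = -1)
    (heq : ∑ i, C ((η i : ZMod 8)) * K i ^ 4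
         = ∑ j ∈ Finset.range m, (X j : MvPolynomial ℕ (ZMod 8)) ^ 4) :
    m ≤ v := by
  classical
  -- mod 2 data
  set tt : Fin v → ZMod 2 := fun i => ρ82 (constantCoeff (K i)) with htt
  set uu : ℕ → Fin v → ZMod 2 :=
    fun a i => ρ82 (coeff (Finsupp.single a 1) (K i)) with huu
  set pp : ℕ → ℕ → Fin v → ZMod 2 :=
    fun a b i => ρ82 (coeff (Finsupp.single a 1 + Finsupp.single b 1) (K i)) with hpp
  have hη8 : ∀ i, ρ82 ((η i : ZMod 8)) = 1 := by
    intro i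
    rcases hη i with h | h <;> rw [h] <;> push_cast <;>
      simp only [map_one, map_neg] <;> decide
  have hη4 : ∀ i, ρ42 ((η i : ZMod 4)) = 1 := by
    intro i
    rcases hη i with h | h <;> rw [h] <;> push_cast <;>
      simp only [map_one, map_neg] <;> decide
  have hx2 : ∀ x : ZMod 2, x * x = x := by decide
  -- ### condition C2
  have hC2 : ∀ a : ℕ, (∑ i, tt i * uu a i) = 0 := by
    intro a
    have h0 : ∑ i, constantCoeff (pderiv a (C ((η i : ZMod 8)) * K i ^ 4))
        = ∑ j ∈ Finset.range m, constantCoeff (pderiv a ((X j : MvPolynomial ℕ (ZMod 8)) ^ 4)) := by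
      have := congrArg (fun P => constantCoeff (pderiv a P)) heq
      simpa only [map_sum] using this
    have hR : ∀ j ∈ Finset.range m,
        constantCoeff (pderiv a ((X j : MvPolynomial ℕ (ZMod 8)) ^ 4)) = 0 := by
      intro j _
      rw [cc_pderiv_pow4, constantCoeff_X]
      ring
    rw [Finset.sum_congr rfl hR, Finset.sum_const_zero] at h0
    have hL : ∀ i : Fin v,
        constantCoeff (pderiv a (C ((η i : ZMod 8)) * K i ^ 4))
          = 4 * ((η i : ZMod 8) * (constantCoeff (K i))^3 * coeff (Finsupp.single a 1) (K i)) := by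
      intro i
      rw [pderiv_C_mul, map_mul, constantCoeff_C, cc_pderiv_pow4]
      ring
    rw [Finset.sum_congr rfl (fun i _ => hL i), ← Finset.mul_sum] at h0
    have := zmod8_four h0
    rw [map_sum] at this
    have hterm : ∀ i : Fin v,
        ρ82 ((η i : ZMod 8) * (constantCoeff (K i))^3 * coeff (Finsupp.single a 1) (K i))
          = tt i * uu a i := by
      intro i
      rw [map_mul, map_mul, map_pow, hη8, htt, huu]
      simp only
      rw [show ρ82 (constantCoeff (K i)) ^ 3
          = ρ82 (constantCoeff (K i)) from by rw [pow_succ, pow_two, hx2, hx2]]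
      ring
    rw [Finset.sum_congr rfl (fun i _ => hterm i)] at this
    exact this
  -- ### condition C5
  have hC5 : ∀ a b : ℕ, a ≠ b →
      (∑ i, (tt i * (uu a i * uu b i) + tt i * pp a b i)) = 0 := by
    intro a b hab
    have h0 : ∑ i, constantCoeff (pderiv b (pderiv a (C ((η i : ZMod 8)) * K i ^ 4)))
        = ∑ j ∈ Finset.range m,
            constantCoeff (pderiv b (pderiv a ((X j : MvPolynomial ℕ (ZMod 8)) ^ 4))) := by
      have := congrArg (fun P => constantCoeff (pderiv b (pderiv a P))) heq
      simpa only [map_sum] using this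
    have hR : ∀ j ∈ Finset.range m,
        constantCoeff (pderiv b (pderiv a ((X j : MvPolynomial ℕ (ZMod 8)) ^ 4))) = 0 := by
      intro j _
      rw [cc_pdpd_pow4 hab, constantCoeff_X]
      ring
    rw [Finset.sum_congr rfl hR, Finset.sum_const_zero] at h0
    have hL : ∀ i : Fin v,
        constantCoeff (pderiv b (pderiv a (C ((η i : ZMod 8)) * K i ^ 4)))
          = 4 * ((η i : ZMod 8) *
              (3 * (constantCoeff (K i))^2 *
                (coeff (Finsupp.single a 1) (K i) * coeff (Finsupp.single b 1) (K i))
               + (constantCoeff (K i))^3 *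
                  coeff (Finsupp.single a 1 + Finsupp.single b 1) (K i))) := by
      intro i
      rw [pderiv_C_mul, pderiv_C_mul, map_mul, constantCoeff_C, cc_pdpd_pow4 hab]
      ring
    rw [Finset.sum_congr rfl (fun i _ => hL i), ← Finset.mul_sum] at h0
    have := zmod8_four h0
    rw [map_sum] at this
    have h3 : ρ82 (3 : ZMod 8) = 1 := by
      rw [show (3 : ZMod 8) = ((3:ℕ) : ZMod 8) by norm_num, map_natCast]
      decide
    have hterm : ∀ i : Fin v,
        ρ82 ((η i : ZMod 8) *
              (3 * (constantCoeff (K i))^2 *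
                (coeff (Finsupp.single a 1) (K i) * coeff (Finsupp.single b 1) (K i))
               + (constantCoeff (K i))^3 *
                  coeff (Finsupp.single a 1 + Finsupp.single b 1) (K i)))
          = tt i * (uu a i * uu b i) + tt i * pp a b i := by
      intro i
      rw [map_mul, map_add, map_mul, map_mul, map_mul, map_pow, map_mul, map_pow, hη8, h3]
      rw [htt, huu, hpp]
      simp only
      rw [show ρ82 (constantCoeff (K i)) ^ 3
          = ρ82 (constantCoeff (K i)) from by rw [pow_succ, pow_two, hx2, hx2]]
      rw [show ρ82 (constantCoeff (K i)) ^ 2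
          = ρ82 (constantCoeff (K i)) from by rw [pow_two, hx2]]
      ring
    rw [Finset.sum_congr rfl (fun i _ => hterm i)] at this
    exact this
  -- ### pass to ZMod 4 and to squares
  have heq4 : ∑ i, C ((η i : ZMod 4)) * (map ρ84 (K i)) ^ 4
      = ∑ j ∈ Finset.range m, (X j : MvPolynomial ℕ (ZMod 4)) ^ 4 := by
    have := congrArg (MvPolynomial.map ρ84) heq
    simpa only [map_sum, map_mul, map_pow, MvPolynomial.map_C, map_intCast, MvPolynomial.map_X]
      using this
  have heq2 : ∑ i, C ((η i : ZMod 4)) * (map ρ84 (K i)) ^ 2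
      = ∑ j ∈ Finset.range m, (X j : MvPolynomial ℕ (ZMod 4)) ^ 2 := by
    apply expand_inj (show 0 < 2 by norm_num)
    rw [map_sum, map_sum]
    rw [Finset.sum_congr rfl (fun i (_ : i ∈ Finset.univ) => by
      rw [map_mul, expand_C, ← pow4_eq_expand_sq] :
      ∀ i ∈ Finset.univ, expand 2 (C ((η i : ZMod 4)) * (map ρ84 (K i)) ^ 2)
        = C ((η i : ZMod 4)) * (map ρ84 (K i)) ^ 4)]
    rw [Finset.sum_congr rfl (fun j (_ : j ∈ Finset.range m) => by
      rw [map_pow, expand_X, ← pow_mul] :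
      ∀ j ∈ Finset.range m, expand 2 ((X j : MvPolynomial ℕ (ZMod 4)) ^ 2)
        = (X j : MvPolynomial ℕ (ZMod 4)) ^ 4)]
    exact heq4
  -- bridge for coefficients of map ρ84
  have hbrid : ∀ (d : ℕ →₀ ℕ) (i : Fin v),
      ρ42 (coeff d (map ρ84 (K i))) = ρ82 (coeff d (K i)) := by
    intro d i
    rw [MvPolynomial.coeff_map, ρ_comp]
  have hbridcc : ∀ i : Fin v,
      ρ42 (constantCoeff (map ρ84 (K i))) = ρ82 (constantCoeff (K i)) := by
    intro i
    rw [MvPolynomial.constantCoeff_map, ρ_comp]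
  -- ### condition C3
  have hC3 : ∀ a b : ℕ, a ≠ b →
      (∑ i, (uu a i * uu b i + tt i * pp a b i)) = 0 := by
    intro a b hab
    have h0 : ∑ i, constantCoeff (pderiv b (pderiv a (C ((η i : ZMod 4)) * (map ρ84 (K i)) ^ 2)))
        = ∑ j ∈ Finset.range m,
            constantCoeff (pderiv b (pderiv a ((X j : MvPolynomial ℕ (ZMod 4)) ^ 2))) := by
      have := congrArg (fun P => constantCoeff (pderiv b (pderiv a P))) heq2
      simpa only [map_sum] using this
    have hR : ∀ j ∈ Finset.range m,
        constantCoeff (pderiv b (pderiv a ((X j : MvPolynomial ℕ (ZMod 4)) ^ 2))) = 0 := by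
      intro j _
      rw [cc_pdpd_sq hab, constantCoeff_X, coeff_single_X, coeff_single_X]
      by_cases hja : j = a
      · subst hja
        rw [if_pos rfl, if_neg hab]
        ring
      · rw [if_neg hja]
        ring
    rw [Finset.sum_congr rfl hR, Finset.sum_const_zero] at h0
    have hL : ∀ i : Fin v,
        constantCoeff (pderiv b (pderiv a (C ((η i : ZMod 4)) * (map ρ84 (K i)) ^ 2)))
          = 2 * ((η i : ZMod 4) *
              (coeff (Finsupp.single a 1) (map ρ84 (K i)) * coeff (Finsupp.single b 1) (map ρ84 (K i))
               + constantCoeff (map ρ84 (K i)) *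
                  coeff (Finsupp.single a 1 + Finsupp.single b 1) (map ρ84 (K i)))) := by
      intro i
      rw [pderiv_C_mul, pderiv_C_mul, map_mul, constantCoeff_C, cc_pdpd_sq hab]
      ring
    rw [Finset.sum_congr rfl (fun i _ => hL i), ← Finset.mul_sum] at h0
    have := zmod4_two h0
    rw [map_sum] at this
    have hterm : ∀ i : Fin v,
        ρ42 ((η i : ZMod 4) *
              (coeff (Finsupp.single a 1) (map ρ84 (K i)) * coeff (Finsupp.single b 1) (map ρ84 (K i))
               + constantCoeff (map ρ84 (K i)) *
                  coeff (Finsupp.single a 1 + Finsupp.single b 1) (map ρ84 (K i))))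
          = uu a i * uu b i + tt i * pp a b i := by
      intro i
      rw [map_mul, map_add, map_mul, map_mul, hη4, hbrid, hbrid, hbrid, hbridcc]
      rw [htt, huu, hpp]
      ring
    rw [Finset.sum_congr rfl (fun i _ => hterm i)] at this
    exact this
  -- ### condition C1
  have hC1 : ∀ a : ℕ, a ∈ Finset.range m → (∑ i, uu a i) = 1 := by
    intro a ha
    have h0 : ∑ i, constantCoeff (pderiv a (pderiv a (C ((η i : ZMod 4)) * (map ρ84 (K i)) ^ 2)))
        = ∑ j ∈ Finset.range m,
            constantCoeff (pderiv a (pderiv a ((X j : MvPolynomial ℕ (ZMod 4)) ^ 2))) := by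
      have := congrArg (fun P => constantCoeff (pderiv a (pderiv a P))) heq2
      simpa only [map_sum] using this
    have hR : ∀ j ∈ Finset.range m,
        constantCoeff (pderiv a (pderiv a ((X j : MvPolynomial ℕ (ZMod 4)) ^ 2)))
          = if j = a then 2 else 0 := by
      intro j _
      rw [cc_pd2_sq, constantCoeff_X, coeff_single_X]
      by_cases hja : j = a
      · rw [if_pos hja, if_pos hja]
        ring
      · rw [if_neg hja, if_neg hja]
        ring
    rw [Finset.sum_congr rfl hR, Finset.sum_ite_eq' (Finset.range m) a (fun _ => (2 : ZMod 4)),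
      if_pos ha] at h0
    have hL : ∀ i : Fin v,
        constantCoeff (pderiv a (pderiv a (C ((η i : ZMod 4)) * (map ρ84 (K i)) ^ 2)))
          = 2 * ((η i : ZMod 4) * (coeff (Finsupp.single a 1) (map ρ84 (K i)))^2) := by
      intro i
      obtain ⟨w, hw⟩ := exists_cc_pderiv2 a (map ρ84 (K i))
      rw [pderiv_C_mul, pderiv_C_mul, map_mul, constantCoeff_C, cc_pd2_sq, hw]
      have h40 : (4 : ZMod 4) = 0 := by decide
      linear_combination ((η i : ZMod 4) * constantCoeff (map ρ84 (K i)) * w) * h40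
    rw [Finset.sum_congr rfl (fun i _ => hL i), ← Finset.mul_sum] at h0
    have h0' : 2 * ((∑ i, (η i : ZMod 4) * (coeff (Finsupp.single a 1) (map ρ84 (K i)))^2) - 1)
        = 0 := by
      rw [mul_sub, h0]
      ring
    have := zmod4_two h0'
    rw [map_sub, map_one, map_sum] at this
    have hterm : ∀ i : Fin v,
        ρ42 ((η i : ZMod 4) * (coeff (Finsupp.single a 1) (map ρ84 (K i)))^2)
          = uu a i := by
      intro i
      rw [map_mul, map_pow, hη4, hbrid]
      rw [huu]
      simp only
      rw [pow_two, hx2]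
      ring
    rw [Finset.sum_congr rfl (fun i _ => hterm i)] at this
    have := sub_eq_zero.mp this
    exact this
  -- ### Gram matrix / linear independence over ZMod 2
  set w : Fin m → (Fin v → ZMod 2) := fun a i => (1 + tt i) * uu (a : ℕ) i with hw
  have horth : ∀ a b : Fin m, (∑ i, w a i * w b i) = if a = b then 1 else 0 := by
    intro a b
    have hcross : ∀ i, w a i * w b i = (1 + tt i) * (uu (a:ℕ) i * uu (b:ℕ) i) := by
      intro i
      rw [hw]
      simp only
      rw [show ((1 + tt i) * uu (a:ℕ) i) * ((1 + tt i) * uu (b:ℕ) i)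
          = ((1 + tt i) * (1 + tt i)) * (uu (a:ℕ) i * uu (b:ℕ) i) from by ring, hx2]
    by_cases hab : a = b
    · subst hab
      rw [if_pos rfl]
      calc ∑ i, w a i * w a i = ∑ i, (uu (a:ℕ) i + tt i * uu (a:ℕ) i) := by
            apply Finset.sum_congr rfl
            intro i _
            rw [hcross i, hx2]
            ring
        _ = (∑ i, uu (a:ℕ) i) + ∑ i, tt i * uu (a:ℕ) i := Finset.sum_add_distrib
        _ = 1 := by
            rw [hC1 (a:ℕ) (Finset.mem_range.mpr a.isLt), hC2]
            ring
    · rw [if_neg hab]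
      have hab' : (a : ℕ) ≠ (b : ℕ) := fun h => hab (Fin.ext h)
      have h20 : (2 : ZMod 2) = 0 := by decide
      calc ∑ i, w a i * w b i
          = ∑ i, ((uu (a:ℕ) i * uu (b:ℕ) i + tt i * pp (a:ℕ) (b:ℕ) i)
              + (tt i * (uu (a:ℕ) i * uu (b:ℕ) i) + tt i * pp (a:ℕ) (b:ℕ) i)) := by
            apply Finset.sum_congr rfl
            intro i _
            rw [hcross i]
            have : ((uu (a:ℕ) i * uu (b:ℕ) i + tt i * pp (a:ℕ) (b:ℕ) i)
              + (tt i * (uu (a:ℕ) i * uu (b:ℕ) i) + tt i * pp (a:ℕ) (b:ℕ) i))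
              = (1 + tt i) * (uu (a:ℕ) i * uu (b:ℕ) i)
                + 2 * (tt i * pp (a:ℕ) (b:ℕ) i) := by ring
            rw [this, h20]
            ring
        _ = (∑ i, (uu (a:ℕ) i * uu (b:ℕ) i + tt i * pp (a:ℕ) (b:ℕ) i))
            + ∑ i, (tt i * (uu (a:ℕ) i * uu (b:ℕ) i) + tt i * pp (a:ℕ) (b:ℕ) i) :=
            Finset.sum_add_distrib
        _ = 0 := by rw [hC3 _ _ hab', hC5 _ _ hab']; ring
  have hli : LinearIndependent (ZMod 2) w := by
    rw [Fintype.linearIndependent_iff]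
    intro g hg b
    have h1 := congrArg (fun z : Fin v → ZMod 2 => ∑ i, z i * w b i) hg
    simp only [Finset.sum_apply, Pi.smul_apply, smul_eq_mul, Pi.zero_apply, zero_mul,
      Finset.sum_const_zero] at h1
    have hswap : (∑ i, (∑ a, g a * w a i) * w b i) = ∑ a, g a * (∑ i, w a i * w b i) := by
      calc ∑ i, (∑ a, g a * w a i) * w b i
          = ∑ i, ∑ a, g a * w a i * w b i := by
            apply Finset.sum_congr rfl
            intro i _
            rw [Finset.sum_mul]
        _ = ∑ a, ∑ i, g a * w a i * w b i := Finset.sum_comm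
        _ = ∑ a, g a * (∑ i, w a i * w b i) := by
            apply Finset.sum_congr rfl
            intro a _
            rw [Finset.mul_sum]
            apply Finset.sum_congr rfl
            intro i _
            ring
    rw [hswap] at h1
    have hfin : (∑ a, g a * (∑ i, w a i * w b i)) = g b := by
      rw [Finset.sum_congr rfl (fun a (_ : a ∈ Finset.univ) => by
        rw [horth a b] :
        ∀ a ∈ Finset.univ, g a * (∑ i, w a i * w b i) = g a * (if a = b then 1 else 0))]
      rw [Finset.sum_congr rfl (fun a (_ : a ∈ Finset.univ) => by
        split <;> ring :
        ∀ a ∈ Finset.univ, g a * (if a = b then 1 else 0) = if a = b then g a else 0)]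
      rw [Finset.sum_ite_eq' Finset.univ b g, if_pos (Finset.mem_univ b)]
    rw [hfin] at h1
    exact h1
  have hcard := hli.fintype_card_le_finrank
  rw [Module.finrank_pi] at hcard
  simpa using hcard

end
end Stmt0Aux

open MvPolynomial Stmt0Aux in
/-- For `n ≥ 2`, there is no integer `v ≥ 1` such that every element of the subring
of `ℤ[x₁, x₂, …]` generated by all `2^n`-th powers is a signed sum of `v` `2^n`-th powers. -/
theorem stmt_0 (n : ℕ) (hn : 2 ≤ n) :
    ¬ ∃ v : ℕ, 1 ≤ v ∧
      ∀ f ∈ Subring.closure (Set.range fun g : MvPolynomial ℕ ℤ => g ^ (2 ^ n)),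
        ∃ (g : Fin v → MvPolynomial ℕ ℤ) (ε : Fin v → MvPolynomial ℕ ℤ),
          (∀ i, ε i = 1 ∨ ε i = -1) ∧ f = ∑ i, ε i * g i ^ (2 ^ n) := by
  rintro ⟨v, hv1, H⟩
  set m := v + 1 with hm
  have hmem : (∑ j ∈ Finset.range m, (X j : MvPolynomial ℕ ℤ) ^ (2^n))
      ∈ Subring.closure (Set.range fun g : MvPolynomial ℕ ℤ => g ^ (2 ^ n)) := by
    apply Subring.sum_mem
    intro j _
    exact Subring.subset_closure ⟨X j, rfl⟩
  obtain ⟨g, ε, hε, hf⟩ := H _ hmem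
  have hεC : ∀ i, ∃ e : ℤ, (e = 1 ∨ e = -1) ∧ ε i = C e := by
    intro i
    rcases hε i with h | h
    · exact ⟨1, Or.inl rfl, by rw [h, map_one]⟩
    · exact ⟨-1, Or.inr rfl, by rw [h, map_neg, map_one]⟩
  choose η hη hεη using hεC
  have hf' : (∑ j ∈ Finset.range m, (X j : MvPolynomial ℕ ℤ) ^ (2^n))
      = ∑ i, C (η i) * g i ^ (2^n) := by
    rw [hf]
    apply Finset.sum_congr rfl
    intro i _
    rw [hεη i]
  set φ := MvPolynomial.map (Int.castRingHom (ZMod 8)) with hφ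
  set G : Fin v → MvPolynomial ℕ (ZMod 8) := fun i => φ (g i) with hG
  have heq8 : ∑ i, C ((η i : ZMod 8)) * (G i) ^ (2^n)
      = ∑ j ∈ Finset.range m, (X j : MvPolynomial ℕ (ZMod 8)) ^ (2^n) := by
    have h := congrArg φ hf'
    simp only [hφ, map_sum, map_mul, map_pow, MvPolynomial.map_C, MvPolynomial.map_X,
      Int.coe_castRingHom] at h
    exact h.symm
  have hd : 0 < 2^(n-2) := pow_pos (by norm_num) _
  have h4d : 2^n = 2^(n-2) * 4 := by
    rw [show (4:ℕ) = 2^2 from rfl, ← pow_add]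
    congr 1
    omega
  set d := 2^(n-2) with hdd
  have hpow : ∀ i, (G i)^(2^n) = (expand d (G i))^4 := by
    intro i
    rw [h4d, pow_mul]
    apply pow4_eq_of_map_eq
    rw [map_pow, map_expand]
    exact pow_two_pow_eq_expand (n-2) _
  have hEL : ∑ i, C ((η i : ZMod 8)) * (G i)^(2^n)
      = expand d (∑ i, C ((η i : ZMod 8)) * (G i)^4) := by
    rw [map_sum]
    apply Finset.sum_congr rfl
    intro i _
    calc C ((η i : ZMod 8)) * (G i)^(2^n)
        = C ((η i : ZMod 8)) * (expand d (G i))^4 := by rw [hpow i]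
      _ = expand d (C ((η i : ZMod 8)) * (G i)^4) := by rw [map_mul, map_pow, expand_C]
  have hER : ∑ j ∈ Finset.range m, (X j : MvPolynomial ℕ (ZMod 8))^(2^n)
      = expand d (∑ j ∈ Finset.range m, (X j : MvPolynomial ℕ (ZMod 8))^4) := by
    rw [map_sum]
    apply Finset.sum_congr rfl
    intro j _
    rw [map_pow, expand_X, ← pow_mul, ← h4d]
  have hcore : ∑ i, C ((η i : ZMod 8)) * (G i)^4
      = ∑ j ∈ Finset.range m, (X j : MvPolynomial ℕ (ZMod 8))^4 := by
    apply Stmt0Aux.expand_inj hd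
    rw [← hEL, ← hER]
    exact heq8
  have hfin := core G η hη hcore
  omega
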